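/- Let $X_1, \dots, X_m \in \mathbb{R}^n$ and let $w \in \mathbb{R}^m$ with $\sum_i w_i = 1$, $0 \le w_i \le \frac{1}{(1-\epsilon)m}$. Then $\Big\| \sum_i w_i X_i X_i^\top - \frac{1}{m}\sum_i X_i X_i^\top \Big\|_{op} \le \sqrt{\frac{\epsilon}{1-\epsilon}} \cdot \max_{\|v\|=1} \sqrt{\frac{1}{m}\sum_{i=1}^m \langle X_i, v\rangle^4}$. -/

import Mathlib

/-- The ℓ²-operator norm of a real square matrix. -/
noncomputable def opNorm {n : ℕ} (M : Matrix (Fin n) (Fin n) ℝ) : ℝ :=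
  ‖Matrix.toEuclideanCLM (𝕜 := ℝ) M‖

set_option maxHeartbeats 1000000 in
/-- For points `X₁, …, Xₘ ∈ ℝⁿ` and weights `w` with `∑ wᵢ = 1`,
`0 ≤ wᵢ ≤ 1/((1-ε)m)`:
`‖∑ wᵢ XᵢXᵢᵀ - (1/m)∑ XᵢXᵢᵀ‖_op ≤ √(ε/(1-ε)) · max_{‖v‖=1} √((1/m)∑ ⟨Xᵢ, v⟩⁴)`. -/
theorem weighted_second_moment_deviation (m n : ℕ) (hn : 0 < n)
    (ε : ℝ) (hε0 : 0 ≤ ε) (hε1 : ε < 1)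
    (X : Fin m → Fin n → ℝ) (w : Fin m → ℝ)
    (hsum : ∑ i, w i = 1)
    (hw : ∀ i, 0 ≤ w i ∧ w i ≤ 1 / ((1 - ε) * m)) :
    opNorm ((∑ i, w i • Matrix.vecMulVec (X i) (X i))
        - (1 / (m : ℝ)) • ∑ i, Matrix.vecMulVec (X i) (X i))
      ≤ Real.sqrt (ε / (1 - ε))
        * ⨆ v : {v : Fin n → ℝ // ∑ k, v k ^ 2 = 1},
            Real.sqrt ((1 / (m : ℝ)) * ∑ i, (∑ k, X i k * v.1 k) ^ 4) := by
  classical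
  have hm0 : m ≠ 0 := by
    rintro rfl
    simp at hsum
  have hm : (0:ℝ) < m := by exact_mod_cast Nat.pos_of_ne_zero hm0
  have h1ε : (0:ℝ) < 1 - ε := by linarith
  set d : Fin m → ℝ := fun i => w i - 1 / m with hd
  set inn : Fin m → (Fin n → ℝ) → ℝ := fun i v => ∑ k, X i k * v k with hinn
  set M : Matrix (Fin n) (Fin n) ℝ :=
    (∑ i, w i • Matrix.vecMulVec (X i) (X i))
      - (1 / (m : ℝ)) • ∑ i, Matrix.vecMulVec (X i) (X i) with hM
  -- the index type is nonempty
  haveI hne : Nonempty {v : Fin n → ℝ // ∑ k, v k ^ 2 = 1} := by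
    refine ⟨⟨Pi.single ⟨0, hn⟩ 1, ?_⟩⟩
    simp [Pi.single_apply, sq]
  -- boundedness of the sup
  have hbdd : BddAbove (Set.range fun v : {v : Fin n → ℝ // ∑ k, v k ^ 2 = 1} =>
      Real.sqrt ((1 / (m : ℝ)) * ∑ i, (inn i v.1) ^ 4)) := by
    refine ⟨Real.sqrt ((1 / (m : ℝ)) * ∑ i, (∑ k, (X i k) ^ 2) ^ 2), ?_⟩
    rintro x ⟨v, rfl⟩
    apply Real.sqrt_le_sqrt
    apply mul_le_mul_of_nonneg_left _ (by positivity)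
    apply Finset.sum_le_sum
    intro i _
    have h1 : (inn i v.1) ^ 2 ≤ ∑ k, (X i k) ^ 2 := by
      have := Finset.sum_mul_sq_le_sq_mul_sq Finset.univ (fun k => X i k) (fun k => v.1 k)
      calc (inn i v.1) ^ 2 ≤ (∑ k, (X i k) ^ 2) * ∑ k, (v.1 k) ^ 2 := this
        _ = ∑ k, (X i k) ^ 2 := by rw [v.2, mul_one]
    calc (inn i v.1) ^ 4 = ((inn i v.1) ^ 2) ^ 2 := by ring
      _ ≤ (∑ k, (X i k) ^ 2) ^ 2 := by
          apply pow_le_pow_left₀ (sq_nonneg _) h1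
  set S : ℝ := ⨆ v : {v : Fin n → ℝ // ∑ k, v k ^ 2 = 1},
      Real.sqrt ((1 / (m : ℝ)) * ∑ i, (inn i v.1) ^ 4) with hSdef
  have hS0 : 0 ≤ S := by
    obtain ⟨v⟩ := hne
    exact le_trans (Real.sqrt_nonneg _) (le_ciSup hbdd v)
  -- sum of squared deviations bound
  have hA : ∑ i, d i ^ 2 ≤ ε / ((1 - ε) * m) := by
    have h1 : ∑ i, d i ^ 2 = (∑ i, w i ^ 2) - 1 / m := by
      have he : ∀ i : Fin m, d i ^ 2 = w i ^ 2 - (2 / m) * w i + 1 / m ^ 2 := by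
        intro i; simp only [hd]; field_simp; ring
      rw [Finset.sum_congr rfl (fun i _ => he i), Finset.sum_add_distrib,
        Finset.sum_sub_distrib, ← Finset.mul_sum, hsum, Finset.sum_const, Finset.card_fin,
        nsmul_eq_mul]
      field_simp
      ring
    have h2 : ∑ i, w i ^ 2 ≤ 1 / ((1 - ε) * m) := by
      calc ∑ i, w i ^ 2 ≤ ∑ i, (1 / ((1 - ε) * m)) * w i := by
            apply Finset.sum_le_sum
            intro i _
            have h := hw i
            nlinarith [h.1, h.2]
        _ = 1 / ((1 - ε) * m) := by rw [← Finset.mul_sum, hsum, mul_one]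
    have h3 : ε / ((1 - ε) * m) = 1 / ((1 - ε) * m) - 1 / m := by
      field_simp
      ring
    rw [h1, h3]; linarith
  -- fourth moment bound for arbitrary vectors
  have hfourth : ∀ v : Fin n → ℝ, ∑ i, (inn i v) ^ 4 ≤ (∑ k, v k ^ 2) ^ 2 * (m * S ^ 2) := by
    intro v
    by_cases hv : ∑ k, v k ^ 2 = 0
    · have hz : ∀ k, v k = 0 := by
        intro k
        have h := (Finset.sum_eq_zero_iff_of_nonneg (fun k _ => sq_nonneg (v k))).1 hv k
          (Finset.mem_univ k)
        exact pow_eq_zero_iff two_ne_zero |>.1 h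
      have hsumz : ∑ i, (inn i v) ^ 4 = 0 := by
        apply Finset.sum_eq_zero
        intro i _
        have h0 : inn i v = 0 := Finset.sum_eq_zero fun k _ => by rw [hz k, mul_zero]
        rw [h0]
        norm_num
      rw [hsumz]
      positivity
    · have hvpos : 0 < ∑ k, v k ^ 2 :=
        lt_of_le_of_ne (Finset.sum_nonneg fun k _ => sq_nonneg _) (Ne.symm hv)
      set r : ℝ := Real.sqrt (∑ k, v k ^ 2) with hr
      have hrpos : 0 < r := Real.sqrt_pos.2 hvpos
      have hr2 : r ^ 2 = ∑ k, v k ^ 2 := Real.sq_sqrt hvpos.le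
      set vh : Fin n → ℝ := fun k => r⁻¹ * v k with hvh
      have hvh1 : ∑ k, vh k ^ 2 = 1 := by
        simp only [hvh, mul_pow]
        rw [← Finset.mul_sum, ← hr2]
        field_simp
      have hinnvh : ∀ i, inn i v = r * inn i vh := by
        intro i
        simp only [hinn, hvh, Finset.mul_sum]
        apply Finset.sum_congr rfl
        intro k _
        field_simp
      have hsup : Real.sqrt ((1 / (m : ℝ)) * ∑ i, (inn i vh) ^ 4) ≤ S :=
        le_ciSup hbdd ⟨vh, hvh1⟩
      have hsum4 : ∑ i, (inn i vh) ^ 4 ≤ m * S ^ 2 := by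
        have h1 : (1 / (m : ℝ)) * ∑ i, (inn i vh) ^ 4 ≤ S ^ 2 := by
          have hnn : 0 ≤ (1 / (m : ℝ)) * ∑ i, (inn i vh) ^ 4 := by positivity
          nlinarith [Real.sq_sqrt hnn, Real.sqrt_nonneg ((1 / (m : ℝ)) * ∑ i, (inn i vh) ^ 4)]
        calc ∑ i, (inn i vh) ^ 4 = m * ((1 / (m : ℝ)) * ∑ i, (inn i vh) ^ 4) := by
              field_simp
          _ ≤ m * S ^ 2 := by
              exact mul_le_mul_of_nonneg_left h1 hm.le
      calc ∑ i, (inn i v) ^ 4 = r ^ 4 * ∑ i, (inn i vh) ^ 4 := by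
            rw [Finset.mul_sum]
            apply Finset.sum_congr rfl
            intro i _
            rw [hinnvh i]; ring
        _ ≤ r ^ 4 * (m * S ^ 2) := by
            exact mul_le_mul_of_nonneg_left hsum4 (by positivity)
        _ = (∑ k, v k ^ 2) ^ 2 * (m * S ^ 2) := by
            rw [← hr2]; ring
  set K : ℝ := Real.sqrt (ε / (1 - ε)) * S with hK
  have hK0 : 0 ≤ K := mul_nonneg (Real.sqrt_nonneg _) hS0
  -- bilinear bound
  have hB : ∀ v u : Fin n → ℝ, |∑ i, d i * (inn i v * inn i u)|
      ≤ K * (Real.sqrt (∑ k, v k ^ 2) * Real.sqrt (∑ k, u k ^ 2)) := by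
    intro v u
    have hRnn : 0 ≤ K * (Real.sqrt (∑ k, v k ^ 2) * Real.sqrt (∑ k, u k ^ 2)) := by positivity
    have hsq : (∑ i, d i * (inn i v * inn i u)) ^ 2
        ≤ (K * (Real.sqrt (∑ k, v k ^ 2) * Real.sqrt (∑ k, u k ^ 2))) ^ 2 := by
      have cs1 : (∑ i, d i * (inn i v * inn i u)) ^ 2
          ≤ (∑ i, d i ^ 2) * ∑ i, (inn i v * inn i u) ^ 2 :=
        Finset.sum_mul_sq_le_sq_mul_sq Finset.univ _ _
      have cs2 : (∑ i, (inn i v * inn i u) ^ 2) ^ 2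
          ≤ (∑ i, (inn i v) ^ 4) * ∑ i, (inn i u) ^ 4 := by
        have := Finset.sum_mul_sq_le_sq_mul_sq Finset.univ
          (fun i => (inn i v) ^ 2) (fun i => (inn i u) ^ 2)
        calc (∑ i, (inn i v * inn i u) ^ 2) ^ 2
            = (∑ i, (inn i v) ^ 2 * (inn i u) ^ 2) ^ 2 := by
              congr 1; apply Finset.sum_congr rfl; intro i _; ring
          _ ≤ (∑ i, ((inn i v) ^ 2) ^ 2) * ∑ i, ((inn i u) ^ 2) ^ 2 := this
          _ = (∑ i, (inn i v) ^ 4) * ∑ i, (inn i u) ^ 4 := by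
              congr 1 <;> (apply Finset.sum_congr rfl; intro i _; ring)
      have h4v := hfourth v
      have h4u := hfourth u
      have hnnpr : 0 ≤ ∑ i, (inn i v * inn i u) ^ 2 :=
        Finset.sum_nonneg fun i _ => sq_nonneg _
      have hnn4v : 0 ≤ ∑ i, (inn i v) ^ 4 := Finset.sum_nonneg fun i _ => by positivity
      have hnn4u : 0 ≤ ∑ i, (inn i u) ^ 4 := Finset.sum_nonneg fun i _ => by positivity
      have hd2 : 0 ≤ ∑ i, d i ^ 2 := Finset.sum_nonneg fun i _ => sq_nonneg _
      -- combine
      have hmul : (∑ i, (inn i v) ^ 4) * ∑ i, (inn i u) ^ 4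
          ≤ ((∑ k, v k ^ 2) ^ 2 * (m * S ^ 2)) * ((∑ k, u k ^ 2) ^ 2 * (m * S ^ 2)) :=
        mul_le_mul h4v h4u hnn4u (by positivity)
      have hpr : (∑ i, (inn i v * inn i u) ^ 2) ^ 2
          ≤ (((∑ k, v k ^ 2) * (∑ k, u k ^ 2)) * (m * S ^ 2)) ^ 2 := by
        calc (∑ i, (inn i v * inn i u) ^ 2) ^ 2
            ≤ (∑ i, (inn i v) ^ 4) * ∑ i, (inn i u) ^ 4 := cs2
          _ ≤ ((∑ k, v k ^ 2) ^ 2 * (m * S ^ 2)) * ((∑ k, u k ^ 2) ^ 2 * (m * S ^ 2)) := hmul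
          _ = (((∑ k, v k ^ 2) * (∑ k, u k ^ 2)) * (m * S ^ 2)) ^ 2 := by ring
      have hpr' : ∑ i, (inn i v * inn i u) ^ 2
          ≤ ((∑ k, v k ^ 2) * (∑ k, u k ^ 2)) * (m * S ^ 2) := by
        have hrnn : 0 ≤ ((∑ k, v k ^ 2) * (∑ k, u k ^ 2)) * (m * S ^ 2) := by
          have h1 : 0 ≤ ∑ k, v k ^ 2 := Finset.sum_nonneg fun k _ => sq_nonneg _
          have h2 : 0 ≤ ∑ k, u k ^ 2 := Finset.sum_nonneg fun k _ => sq_nonneg _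
          positivity
        nlinarith [hpr, hnnpr, hrnn]
      have hsqv : Real.sqrt (∑ k, v k ^ 2) ^ 2 = ∑ k, v k ^ 2 :=
        Real.sq_sqrt (Finset.sum_nonneg fun k _ => sq_nonneg _)
      have hsqu : Real.sqrt (∑ k, u k ^ 2) ^ 2 = ∑ k, u k ^ 2 :=
        Real.sq_sqrt (Finset.sum_nonneg fun k _ => sq_nonneg _)
      have hsqe : Real.sqrt (ε / (1 - ε)) ^ 2 = ε / (1 - ε) :=
        Real.sq_sqrt (by positivity)
      calc (∑ i, d i * (inn i v * inn i u)) ^ 2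
          ≤ (∑ i, d i ^ 2) * ∑ i, (inn i v * inn i u) ^ 2 := cs1
        _ ≤ (ε / ((1 - ε) * m)) * (((∑ k, v k ^ 2) * (∑ k, u k ^ 2)) * (m * S ^ 2)) := by
            apply mul_le_mul hA hpr' hnnpr (by positivity)
        _ = (ε / (1 - ε)) * S ^ 2 * ((∑ k, v k ^ 2) * (∑ k, u k ^ 2)) := by
            field_simp
        _ = (K * (Real.sqrt (∑ k, v k ^ 2) * Real.sqrt (∑ k, u k ^ 2))) ^ 2 := by
            rw [hK, mul_pow, mul_pow, mul_pow, hsqe, hsqv, hsqu]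
    have := Real.sqrt_le_sqrt hsq
    rwa [Real.sqrt_sq_eq_abs, Real.sqrt_sq hRnn] at this
  -- key identity for the quadratic/bilinear form
  have hMe : ∀ k j, M k j = ∑ i, d i * (X i k * X i j) := by
    intro k j
    simp only [hM, Matrix.sub_apply, Matrix.smul_apply, Matrix.sum_apply,
      Matrix.vecMulVec_apply, smul_eq_mul, Finset.mul_sum, ← Finset.sum_sub_distrib]
    apply Finset.sum_congr rfl
    intro i _
    simp only [hd]
    ring
  have hmv : ∀ (v : Fin n → ℝ) (k : Fin n),
      M.mulVec v k = ∑ i, d i * X i k * inn i v := by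
    intro v k
    simp only [Matrix.mulVec, dotProduct, hMe, Finset.sum_mul]
    rw [Finset.sum_comm]
    apply Finset.sum_congr rfl
    intro i _
    simp only [hinn, Finset.mul_sum]
    apply Finset.sum_congr rfl
    intro j _
    ring
  have hkey : ∀ v u : Fin n → ℝ,
      ∑ k, (M.mulVec v k) * u k = ∑ i, d i * (inn i v * inn i u) := by
    intro v u
    have h1 : ∀ k, M.mulVec v k * u k = ∑ i, d i * X i k * inn i v * u k := by
      intro k
      rw [hmv v k, Finset.sum_mul]
    rw [Finset.sum_congr rfl (fun k _ => h1 k), Finset.sum_comm]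
    apply Finset.sum_congr rfl
    intro i _
    calc ∑ k, d i * X i k * inn i v * u k
        = d i * inn i v * ∑ k, X i k * u k := by
          rw [Finset.mul_sum]
          apply Finset.sum_congr rfl
          intro k _
          ring
      _ = d i * (inn i v * inn i u) := by
          simp only [hinn]
          ring
  -- operator norm bound
  have hnormz : ∀ z : EuclideanSpace ℝ (Fin n), ‖z‖ = Real.sqrt (∑ k, (z k) ^ 2) := by
    intro z
    rw [EuclideanSpace.norm_eq]
    congr 1
    apply Finset.sum_congr rfl
    intro k _
    rw [Real.norm_eq_abs, sq_abs]
  rw [opNorm]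
  apply ContinuousLinearMap.opNorm_le_bound _ hK0
  intro v
  set y : EuclideanSpace ℝ (Fin n) := Matrix.toEuclideanCLM (𝕜 := ℝ) M v with hy
  have hyk : ∀ k, y k = M.mulVec (fun j => v j) k := by
    intro k
    exact congrFun (Matrix.ofLp_toEuclideanCLM M v) k
  have hy2 : ‖y‖ ^ 2 = ∑ i, d i * (inn i (fun j => v j) * inn i (fun k => y k)) := by
    rw [hnormz y, Real.sq_sqrt (Finset.sum_nonneg fun k _ => sq_nonneg _)]
    rw [← hkey (fun j => v j) (fun k => y k)]
    apply Finset.sum_congr rfl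
    intro k _
    rw [← hyk k]
    ring
  have hbound : ‖y‖ ^ 2 ≤ K * ‖v‖ * ‖y‖ := by
    rw [hy2]
    calc ∑ i, d i * (inn i (fun j => v j) * inn i (fun k => y k))
        ≤ |∑ i, d i * (inn i (fun j => v j) * inn i (fun k => y k))| := le_abs_self _
      _ ≤ K * (Real.sqrt (∑ k, v k ^ 2) * Real.sqrt (∑ k, (y k) ^ 2)) := hB _ _
      _ = K * ‖v‖ * ‖y‖ := by rw [hnormz v, hnormz y]; ring
  by_cases hz : ‖y‖ = 0
  · rw [hz]; positivity
  · have hzpos : 0 < ‖y‖ := lt_of_le_of_ne (norm_nonneg _) (Ne.symm hz)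
    nlinarith [hbound]
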